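/- arXiv:math/0505122 — 3 statements merged into one kernel-verified Lean document; each statement's English description precedes it below -/
import Mathlib

section
/- Let f(z1,z2) = z1 * conj(z2)^2 on the unit sphere in C^2. For every complex line L tangent to the sphere of radius sqrt(1/3) centered at 0, and every (1,0)-form alpha with constant coefficients, the integral of f*alpha over L intersected with the unit sphere equals 0, yet f does not extend holomorphically to the unit ball. -/
open Metric Complex


lemma auxInt (c : ℂ) (hc : c ≠ 0) (h1 : Complex.exp (c * ((2*Real.pi : ℝ) : ℂ)) = 1) :
    ∫ θ in (0:ℝ)..(2*Real.pi), Complex.exp (c * θ) = 0 := by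
  rw [integral_exp_mul_complex hc, h1]
  simp

theorem part1 : (∀ p v : EuclideanSpace ℂ (Fin 2), ‖p‖ ^ 2 = 1 / 3 → ‖v‖ = 1 →
      (inner ℂ p v : ℂ) = 0 → ∀ a : Fin 2 → ℂ,
      (∫ θ in (0:ℝ)..(2 * Real.pi),
        ((p + (((Real.sqrt (2/3) : ℝ) : ℂ) * Complex.exp (θ * Complex.I)) • v) 0 *
          (starRingEnd ℂ ((p + (((Real.sqrt (2/3) : ℝ) : ℂ) * Complex.exp (θ * Complex.I)) • v) 1)) ^ 2) *
        ((a 0 * v 0 + a 1 * v 1) *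
          (((Real.sqrt (2/3) : ℝ) : ℂ) * Complex.I * Complex.exp (θ * Complex.I)))) = 0) := by
  intro p v hp hv hpv a
  have hO : (starRingEnd ℂ) (p 0) * v 0 + (starRingEnd ℂ) (p 1) * v 1 = 0 := by
    simpa [PiLp.inner_apply, RCLike.inner_apply, Fin.sum_univ_two, mul_comm] using hpv
  have hP : (starRingEnd ℂ) (p 0) * p 0 + (starRingEnd ℂ) (p 1) * p 1 = 1/3 := by
    have h1 : (inner ℂ p p : ℂ) = (‖p‖ : ℂ) ^ 2 := inner_self_eq_norm_sq_to_K p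
    have h2 : ((‖p‖ : ℂ)) ^ 2 = ((1/3 : ℝ) : ℂ) := by
      rw [← Complex.ofReal_pow, hp]
    rw [PiLp.inner_apply, Fin.sum_univ_two] at h1
    simp only [RCLike.inner_apply, mul_comm (p _)] at h1
    rw [h1, h2]; norm_num
  have hV : (starRingEnd ℂ) (v 0) * v 0 + (starRingEnd ℂ) (v 1) * v 1 = 1 := by
    have h1 : (inner ℂ v v : ℂ) = (‖v‖ : ℂ) ^ 2 := inner_self_eq_norm_sq_to_K v
    rw [PiLp.inner_apply, Fin.sum_univ_two] at h1
    simp only [RCLike.inner_apply, mul_comm (v _)] at h1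
    rw [h1, hv]; norm_num
  have hOc : p 0 * (starRingEnd ℂ) (v 0) + p 1 * (starRingEnd ℂ) (v 1) = 0 := by
    have := congrArg (starRingEnd ℂ) hO
    simpa [map_add, map_mul, mul_comm] using this
  have e1 : ((starRingEnd ℂ) (p 0) * v 0) * (p 0 * (starRingEnd ℂ) (v 0))
      = ((starRingEnd ℂ) (p 1) * v 1) * (p 1 * (starRingEnd ℂ) (v 1)) := by
    linear_combination (p 0 * (starRingEnd ℂ) (v 0)) * hO - ((starRingEnd ℂ) (p 1) * v 1) * hOc
  have hkey : (starRingEnd ℂ) (p 0) * p 0 = ((starRingEnd ℂ) (v 1) * v 1)/3 := by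
    linear_combination e1 + ((starRingEnd ℂ) (v 1) * v 1) * hP - ((starRingEnd ℂ) (p 0) * p 0) * hV
  have hG : 2 * p 0 * (starRingEnd ℂ) (p 1) * (starRingEnd ℂ) (v 1)
      + (2/3) * v 0 * ((starRingEnd ℂ) (v 1))^2 = 0 := by
    rcases eq_or_ne (v 1) 0 with h | h
    · rw [h]; simp
    · have hGm : (2 * p 0 * (starRingEnd ℂ) (p 1) * (starRingEnd ℂ) (v 1)
          + (2/3) * v 0 * ((starRingEnd ℂ) (v 1))^2) * v 1 = 0 := by
        linear_combination (2 * p 0 * (starRingEnd ℂ) (v 1)) * hO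
          - (2 * v 0 * (starRingEnd ℂ) (v 1)) * hkey
      exact (mul_eq_zero.mp hGm).resolve_right h
  set r : ℂ := ((Real.sqrt (2/3) : ℝ) : ℂ) with hr
  have hr2 : r * r = (2:ℂ)/3 := by
    rw [hr, ← Complex.ofReal_mul, Real.mul_self_sqrt (by norm_num)]
    push_cast; ring
  have hD : (a 0 * v 0 + a 1 * v 1) * r * Complex.I *
      (2 * r * p 0 * (starRingEnd ℂ) (p 1) * (starRingEnd ℂ) (v 1)
        + r^3 * v 0 * ((starRingEnd ℂ) (v 1))^2) = 0 := by
    linear_combination ((a 0 * v 0 + a 1 * v 1) * r * Complex.I * r) * hG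
      + ((a 0 * v 0 + a 1 * v 1) * r * Complex.I * r * v 0 * ((starRingEnd ℂ) (v 1))^2) * hr2
  have hce : ∀ θ : ℝ, (starRingEnd ℂ) (Complex.exp (θ * Complex.I))
      = Complex.exp (-(θ * Complex.I)) := by
    intro θ
    rw [← Complex.exp_conj, map_mul, Complex.conj_ofReal, Complex.conj_I]
    congr 1; ring
  set K : ℂ := (a 0 * v 0 + a 1 * v 1) * r * Complex.I with hK
  set A : ℂ := K * (p 0 * ((starRingEnd ℂ) (p 1))^2
      + 2 * r^2 * v 0 * (starRingEnd ℂ) (p 1) * (starRingEnd ℂ) (v 1)) with hA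
  set B : ℂ := K * (r * v 0 * ((starRingEnd ℂ) (p 1))^2) with hB
  set C : ℂ := K * (r^2 * p 0 * ((starRingEnd ℂ) (v 1))^2) with hC
  have key : ∀ θ ∈ Set.uIcc (0:ℝ) (2*Real.pi),
      ((p + (r * Complex.exp (θ * Complex.I)) • v) 0 *
          (starRingEnd ℂ ((p + (r * Complex.exp (θ * Complex.I)) • v) 1)) ^ 2) *
        ((a 0 * v 0 + a 1 * v 1) * (r * Complex.I * Complex.exp (θ * Complex.I)))
      = A * Complex.exp (Complex.I * θ) + B * Complex.exp ((2*Complex.I) * θ)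
        + C * Complex.exp ((-Complex.I) * θ) := by
    intro θ _
    have happ0 : (p + (r * Complex.exp (θ * Complex.I)) • v) 0
        = p 0 + (r * Complex.exp (θ * Complex.I)) * v 0 := rfl
    have happ1 : (p + (r * Complex.exp (θ * Complex.I)) • v) 1
        = p 1 + (r * Complex.exp (θ * Complex.I)) * v 1 := rfl
    have hprod : Complex.exp (θ * Complex.I) * Complex.exp (-(θ * Complex.I)) = 1 := by
      rw [← Complex.exp_add]; simp
    rw [happ0, happ1, map_add, map_mul, map_mul, hr, Complex.conj_ofReal, hce θ]
    rw [show (Complex.I * (θ:ℂ)) = (θ:ℂ) * Complex.I from mul_comm _ _]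
    rw [show ((2*Complex.I) * (θ:ℂ)) = (θ:ℂ) * Complex.I + (θ:ℂ) * Complex.I by ring,
      Complex.exp_add]
    rw [show ((-Complex.I) * (θ:ℂ)) = -((θ:ℂ) * Complex.I) by ring]
    rw [hA, hB, hC, hK, hr]
    linear_combination
      (K * (2 * r * p 0 * (starRingEnd ℂ) (p 1) * (starRingEnd ℂ) (v 1))
        + K * (r^2 * p 0 * ((starRingEnd ℂ) (v 1))^2) * Complex.exp (-((θ:ℂ) * Complex.I))
        + K * (2 * r^2 * v 0 * (starRingEnd ℂ) (p 1) * (starRingEnd ℂ) (v 1)) * Complex.exp ((θ:ℂ) * Complex.I)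
        + K * (r^3 * v 0 * ((starRingEnd ℂ) (v 1))^2) * (Complex.exp ((θ:ℂ) * Complex.I) * Complex.exp (-((θ:ℂ) * Complex.I)) + 1)) * hprod
      + hD
  rw [intervalIntegral.integral_congr key]
  have cont : ∀ c : ℂ, Continuous fun θ : ℝ => Complex.exp (c * θ) := fun c =>
    Complex.continuous_exp.comp (continuous_const.mul Complex.continuous_ofReal)
  have ii : ∀ (c M : ℂ), IntervalIntegrable (fun θ : ℝ => M * Complex.exp (c * θ))
      MeasureTheory.volume 0 (2*Real.pi) := fun c M =>
    (continuous_const.mul (cont c)).intervalIntegrable _ _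
  rw [intervalIntegral.integral_add ((ii Complex.I A).add (ii (2*Complex.I) B)) (ii (-Complex.I) C),
    intervalIntegral.integral_add (ii Complex.I A) (ii (2*Complex.I) B)]
  rw [intervalIntegral.integral_const_mul, intervalIntegral.integral_const_mul,
    intervalIntegral.integral_const_mul]
  have hIexp : Complex.exp (Complex.I * ((2*Real.pi : ℝ) : ℂ)) = 1 := by
    rw [show (Complex.I * ((2*Real.pi : ℝ) : ℂ)) = 2*(Real.pi:ℂ)*Complex.I by push_cast; ring]
    exact Complex.exp_two_pi_mul_I
  have h2Iexp : Complex.exp ((2*Complex.I) * ((2*Real.pi : ℝ) : ℂ)) = 1 := by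
    rw [show ((2*Complex.I) * ((2*Real.pi : ℝ) : ℂ)) = ((2:ℤ):ℂ)*(2*(Real.pi:ℂ)*Complex.I) by push_cast; ring]
    exact Complex.exp_int_mul_two_pi_mul_I 2
  have hmIexp : Complex.exp ((-Complex.I) * ((2*Real.pi : ℝ) : ℂ)) = 1 := by
    rw [show ((-Complex.I) * ((2*Real.pi : ℝ) : ℂ)) = ((-1:ℤ):ℂ)*(2*(Real.pi:ℂ)*Complex.I) by push_cast; ring]
    exact Complex.exp_int_mul_two_pi_mul_I (-1)
  rw [auxInt Complex.I Complex.I_ne_zero hIexp,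
    auxInt (2*Complex.I) (by simp [Complex.I_ne_zero]) h2Iexp,
    auxInt (-Complex.I) (by simp [Complex.I_ne_zero]) hmIexp]
  ring


theorem part2 :
    ¬ ∃ g : EuclideanSpace ℂ (Fin 2) → ℂ,
        ContinuousOn g (closedBall (0 : EuclideanSpace ℂ (Fin 2)) 1) ∧
        DifferentiableOn ℂ g (ball (0 : EuclideanSpace ℂ (Fin 2)) 1) ∧
        ∀ z ∈ sphere (0 : EuclideanSpace ℂ (Fin 2)) 1,
          g z = z 0 * (starRingEnd ℂ (z 1)) ^ 2 := by
  rintro ⟨g, hgc, hgd, hgs⟩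
  set c : ℂ := (((Real.sqrt 2)⁻¹ : ℝ) : ℂ) with hc
  set u : EuclideanSpace ℂ (Fin 2) := (WithLp.equiv 2 (Fin 2 → ℂ)).symm ![c, c] with hu
  have hu0 : u 0 = c := rfl
  have hu1 : u 1 = c := rfl
  have hcr : (0:ℝ) < (Real.sqrt 2)⁻¹ := by positivity
  have hnu : ‖u‖ = 1 := by
    rw [EuclideanSpace.norm_eq]
    simp only [Fin.sum_univ_two, hu0, hu1, hc, Complex.norm_real]
    rw [Real.norm_eq_abs, abs_of_pos hcr, ← two_mul, inv_pow,
      Real.sq_sqrt (by norm_num : (0:ℝ) ≤ 2)]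
    norm_num
  have hsmul : ∀ w : ℂ, ‖w • u‖ = ‖w‖ := by
    intro w; rw [norm_smul, hnu, mul_one]
  set F : ℂ → ℂ := fun w => g (w • u) with hF
  have hL : Differentiable ℂ (fun w : ℂ => w • u) :=
    differentiable_id.smul_const u
  have hzero : (∮ z in C((0:ℂ), 1), F z) = 0 := by
    apply circleIntegral_eq_zero_of_differentiable_on_off_countable
      zero_le_one (Set.countable_empty) (s := ∅)
    · apply hgc.comp hL.continuous.continuousOn
      intro w hw
      simp only [mem_closedBall, dist_zero_right] at *
      rw [hsmul]; exact hw
    · intro w hw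
      simp only [Set.diff_empty, mem_ball, dist_zero_right] at hw
      have h1 : DifferentiableAt ℂ g (w • u) := by
        apply hgd.differentiableAt
        exact (isOpen_ball).mem_nhds (by simpa [mem_ball, dist_zero_right, hsmul] using hw)
      exact h1.comp w (hL w)
  have heval : ∀ θ : ℝ, F (circleMap 0 1 θ) = Complex.exp (-(θ * I)) * c ^ 3 := by
    intro θ
    have hmem : (circleMap 0 1 θ : ℂ) • u ∈ sphere (0 : EuclideanSpace ℂ (Fin 2)) 1 := by
      simp [mem_sphere, dist_zero_right, hsmul]
    have hgv := hgs _ hmem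
    have hprod : Complex.exp (θ * I) * Complex.exp (-(θ * I)) = 1 := by
      rw [← Complex.exp_add]; simp
    rw [hF]
    simp only [hgv]
    have e0 : ((circleMap 0 1 θ : ℂ) • u) 0 = circleMap 0 1 θ * c := rfl
    have e1 : ((circleMap 0 1 θ : ℂ) • u) 1 = circleMap 0 1 θ * c := rfl
    rw [e0, e1, circleMap_zero]
    rw [map_mul, hc, Complex.conj_ofReal, map_mul]
    rw [← Complex.exp_conj]
    simp only [map_mul, Complex.conj_ofReal, Complex.conj_I, Complex.ofReal_one, one_mul,
      map_one, mul_neg, neg_mul]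
    linear_combination Complex.exp (-((θ:ℂ) * I)) * (((Real.sqrt 2)⁻¹ : ℝ) : ℂ)^3 * hprod
  have hval : (∮ z in C((0:ℂ), 1), F z) = 2 * Real.pi * I * c ^ 3 := by
    rw [circleIntegral]
    have hcon : ∀ θ ∈ Set.uIcc (0:ℝ) (2*Real.pi),
        deriv (circleMap 0 1) θ • F (circleMap 0 1 θ) = I * c ^ 3 := by
      intro θ _
      rw [deriv_circleMap, heval, circleMap_zero, smul_eq_mul]
      have hprod : Complex.exp (θ * I) * Complex.exp (-(θ * I)) = 1 := by
        rw [← Complex.exp_add]; simp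
      simp only [Complex.ofReal_one, one_mul]
      linear_combination I * c^3 * hprod
    rw [intervalIntegral.integral_congr hcon]
    rw [intervalIntegral.integral_const, sub_zero, real_smul]
    push_cast
    ring
  rw [hzero] at hval
  have hpi : (2 * (Real.pi:ℂ) * I) ≠ 0 := by
    simp [Complex.ofReal_ne_zero, Real.pi_ne_zero, Complex.I_ne_zero]
  have h3 : c ^ 3 = 0 := (mul_eq_zero.mp hval.symm).resolve_left hpi
  have : c ≠ 0 := by
    rw [hc]
    exact_mod_cast Complex.ofReal_ne_zero.mpr (ne_of_gt hcr)
  exact this (pow_eq_zero_iff (by norm_num)|>.mp h3)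

/-- The Globevnik–Stout counterexample: `f(z₁,z₂) = z₁ · conj(z₂)²` on the unit sphere of
`ℂ²` satisfies the Morera condition on every complex line tangent to the sphere of radius
`√(1/3)` centered at `0` (such a line is parametrized as `θ ↦ p + √(2/3) e^{iθ} • v` with
`p` the tangency point, `‖p‖² = 1/3`, `v ⊥ p`, `‖v‖ = 1`, and the Morera condition says
that the integral over the circle `L ∩ ∂B` of `f·α` vanishes for every constant-coefficient
`(1,0)`-form `α = a₀ dz₀ + a₁ dz₁`), and yet `f` does not extend holomorphically to the
unit ball. -/
theorem stmt_0 :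
    (∀ p v : EuclideanSpace ℂ (Fin 2), ‖p‖ ^ 2 = 1 / 3 → ‖v‖ = 1 →
      (inner ℂ p v : ℂ) = 0 → ∀ a : Fin 2 → ℂ,
      (∫ θ in (0:ℝ)..(2 * Real.pi),
        ((p + (((Real.sqrt (2/3) : ℝ) : ℂ) * Complex.exp (θ * Complex.I)) • v) 0 *
          (starRingEnd ℂ ((p + (((Real.sqrt (2/3) : ℝ) : ℂ) * Complex.exp (θ * Complex.I)) • v) 1)) ^ 2) *
        ((a 0 * v 0 + a 1 * v 1) *
          (((Real.sqrt (2/3) : ℝ) : ℂ) * Complex.I * Complex.exp (θ * Complex.I)))) = 0)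
    ∧ ¬ ∃ g : EuclideanSpace ℂ (Fin 2) → ℂ,
        ContinuousOn g (closedBall (0 : EuclideanSpace ℂ (Fin 2)) 1) ∧
        DifferentiableOn ℂ g (ball (0 : EuclideanSpace ℂ (Fin 2)) 1) ∧
        ∀ z ∈ sphere (0 : EuclideanSpace ℂ (Fin 2)) 1,
          g z = z 0 * (starRingEnd ℂ (z 1)) ^ 2 := by
  exact ⟨part1, part2⟩
end

section
/- Let ρ : C^n → R be C^2 with ∂ρ(z) ≠ 0 on {ρ = 0}, and suppose at a point z on {ρ = 0} with the normalization ∂ρ(z) = (1,0,…,0) and z = (0,c,0,…,0), c ≠ 0, the real Hessian of ρ restricted to the complex z_2-line is positive definite. Then the map r : C^n → R^3, r(w) = (ρ(w), Re(∂ρ(w)·w), Im(∂ρ(w)·w)), has derivative of rank 3 at z. -/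
/-- Let `ρ : ℂⁿ → ℝ` be `C²` with holomorphic gradient `dρ` (so `Dρ_w(v) = 2 Re⟨∂ρ(w), v⟩`)
of class `C¹`, and let `z` be a point with `ρ(z) = 0`, normalized so that
`∂ρ(z) = (1,0,…,0)` and `z = (0,c,0,…,0)` with `c ≠ 0`.  If the real Hessian of `ρ` at `z`
restricted to the complex `z₂`-line is positive definite, then the map
`r : ℂⁿ → ℝ³`, `r(w) = (ρ(w), Re(∂ρ(w)·w), Im(∂ρ(w)·w))`, has derivative of rank 3
(i.e. surjective differential) at `z`. -/
theorem stmt_8 (n : ℕ) (hn : 2 ≤ n) (ρ : (Fin n → ℂ) → ℝ)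
    (dρ : (Fin n → ℂ) → Fin n → ℂ)
    (hρ : ContDiff ℝ 2 ρ) (hdρ : ContDiff ℝ 1 dρ)
    (hgrad : ∀ z v : Fin n → ℂ, fderiv ℝ ρ z v = 2 * (∑ j, dρ z j * v j).re)
    (z : Fin n → ℂ) (c : ℂ) (hc : c ≠ 0)
    (hz0 : ρ z = 0)
    (hnorm1 : dρ z = fun j => if j = (⟨0, by omega⟩ : Fin n) then 1 else 0)
    (hnorm2 : z = fun j => if j = (⟨1, by omega⟩ : Fin n) then c else 0)
    (hHess : ∀ v : ℂ, v ≠ 0 →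
      0 < fderiv ℝ (fun w => fderiv ℝ ρ w) z
            (fun j => if j = (⟨1, by omega⟩ : Fin n) then v else 0)
            (fun j => if j = (⟨1, by omega⟩ : Fin n) then v else 0))
    (r : (Fin n → ℂ) → Fin 3 → ℝ)
    (hr : r = fun w => ![ρ w, (∑ j, dρ w j * w j).re, (∑ j, dρ w j * w j).im]) :
    Function.Surjective (fderiv ℝ r z) := by
  classical
  have h0n : 0 < n := by omega
  have h1n : 1 < n := by omega
  let i0 : Fin n := ⟨0, h0n⟩
  let i1 : Fin n := ⟨1, h1n⟩
  have hi01 : i1 ≠ i0 := by simp [i0, i1, Fin.ext_iff]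
  -- the embedding of ℂ as the z₂-line
  let em : ℂ → (Fin n → ℂ) := fun u j => if j = i1 then u else 0
  -- basic differentiability
  have hρd : Differentiable ℝ ρ := hρ.differentiable (by norm_num)
  have hdρd : Differentiable ℝ dρ := hdρ.differentiable (by norm_num)
  have hdj : ∀ j, Differentiable ℝ (fun w => dρ w j) := differentiable_pi.mp hdρd
  have hwj : ∀ j, Differentiable ℝ (fun w : Fin n → ℂ => w j) :=
    differentiable_pi.mp differentiable_id
  -- derivative of g(w) = ∑ dρ(w)ⱼ wⱼ
  let T : (Fin n → ℂ) →L[ℝ] ℂ := fderiv ℝ (fun w => ∑ j, dρ w j * w j) z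
  have hgdiff : Differentiable ℝ (fun w => ∑ j, dρ w j * w j) := by
    apply Differentiable.fun_sum
    intro j _
    exact (hdj j).mul (hwj j)
  let F1' : (Fin n → ℂ) →L[ℝ] ℂ := fderiv ℝ (fun w => dρ w i1) z
  have hTsum : (T : (Fin n → ℂ) →L[ℝ] ℂ) =
      ∑ j, fderiv ℝ (fun w => dρ w j * w j) z := by
    exact fderiv_fun_sum (fun j _ => ((hdj j) z).mul ((hwj j) z))
  have hz' : ∀ j, z j = if j = i1 then c else 0 := fun j => by rw [hnorm2]
  have hd' : ∀ j, dρ z j = if j = i0 then 1 else 0 := fun j => by rw [hnorm1]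
  have hTv : ∀ v, T v = v i0 + c * F1' v := by
    intro v
    have h1 : T v = ∑ j, (dρ z j * v j + z j * (fderiv ℝ (fun w => dρ w j) z v)) := by
      rw [hTsum]
      rw [ContinuousLinearMap.sum_apply]
      refine Finset.sum_congr rfl fun j _ => ?_
      rw [fderiv_fun_mul ((hdj j) z) ((hwj j) z)]
      have : fderiv ℝ (fun w : Fin n → ℂ => w j) z = ContinuousLinearMap.proj j :=
        (hasFDerivAt_apply j z).fderiv
      simp [this, smul_eq_mul]
    rw [h1, Finset.sum_add_distrib]
    have e1 : ∑ j, dρ z j * v j = v i0 := by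
      rw [Finset.sum_eq_single i0]
      · rw [hd' i0]; simp
      · intro j _ hj; rw [hd' j]; simp [hj]
      · intro h; exact absurd (Finset.mem_univ i0) h
    have e2 : ∑ j, z j * (fderiv ℝ (fun w => dρ w j) z v) = c * F1' v := by
      rw [Finset.sum_eq_single i1]
      · rw [hz' i1]; simp [F1']
      · intro j _ hj; rw [hz' j]; simp [hj]
      · intro h; exact absurd (Finset.mem_univ i1) h
    rw [e1, e2]
  -- derivative of r
  let D' : Fin 3 → ((Fin n → ℂ) →L[ℝ] ℝ) :=
    ![fderiv ℝ ρ z, Complex.reCLM.comp T, Complex.imCLM.comp T]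
  have hrD : HasFDerivAt r (ContinuousLinearMap.pi D') z := by
    have h0 : HasFDerivAt ρ (fderiv ℝ ρ z) z := (hρd z).hasFDerivAt
    have h1 : HasFDerivAt (fun w => (∑ j, dρ w j * w j).re) (Complex.reCLM.comp T) z :=
      Complex.reCLM.hasFDerivAt.comp z (hgdiff z).hasFDerivAt
    have h2 : HasFDerivAt (fun w => (∑ j, dρ w j * w j).im) (Complex.imCLM.comp T) z :=
      Complex.imCLM.hasFDerivAt.comp z (hgdiff z).hasFDerivAt
    rw [hr]
    apply hasFDerivAt_pi''
    intro i
    fin_cases i <;>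
      simp only [ContinuousLinearMap.proj_pi, Matrix.cons_val_zero, Matrix.cons_val_one,
        Matrix.head_cons, Matrix.cons_val_two, Matrix.tail_cons, Fin.isValue, D']
    · exact h0
    · exact h1
    · exact h2
  have hDr : fderiv ℝ r z = ContinuousLinearMap.pi D' := hrD.fderiv
  -- the second derivative along the z₂-line
  have hρ'd : Differentiable ℝ (fun w => fderiv ℝ ρ w) :=
    (hρ.fderiv_right (m := 1) (by norm_num)).differentiable (by norm_num)
  have hKey : ∀ u : ℂ, u ≠ 0 → 0 < (F1' (em u) * u).re := by
    intro u hu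
    have hS : HasFDerivAt (fun w => fderiv ℝ ρ w (em u))
        ((ContinuousLinearMap.apply ℝ ℝ (em u)).comp
          (fderiv ℝ (fun w => fderiv ℝ ρ w) z)) z :=
      (ContinuousLinearMap.apply ℝ ℝ (em u)).hasFDerivAt.comp z (hρ'd z).hasFDerivAt
    have hfun : (fun w => fderiv ℝ ρ w (em u)) = fun w => 2 * (dρ w i1 * u).re := by
      funext w
      rw [hgrad]
      congr 2
      rw [Finset.sum_eq_single i1]
      · simp [em]
      · intro j _ hj; simp [em, hj]
      · intro h; exact absurd (Finset.mem_univ i1) h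
    have h2 : HasFDerivAt (fun w => fderiv ℝ ρ w (em u))
        ((2:ℝ) • (Complex.reCLM.comp (F1'.smulRight u))) z := by
      rw [hfun]
      exact (Complex.reCLM.hasFDerivAt.comp z
        (((hdj i1) z).hasFDerivAt.mul_const' u)).const_mul 2
    have huniq := hS.unique h2
    have hval : fderiv ℝ (fun w => fderiv ℝ ρ w) z (em u) (em u)
        = 2 * (F1' (em u) * u).re := by
      have h3 := congrArg (fun (M : (Fin n → ℂ) →L[ℝ] ℝ) => M (em u)) huniq
      simpa only [ContinuousLinearMap.comp_apply, ContinuousLinearMap.apply_apply,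
        ContinuousLinearMap.smul_apply, ContinuousLinearMap.smulRight_apply,
        Complex.reCLM_apply, smul_eq_mul] using h3
    have hpos := hHess u hu
    rw [show (fun j => if j = (⟨1, by omega⟩ : Fin n) then u else 0) = em u from rfl] at hpos
    rw [hval] at hpos
    linarith
  -- the real-linear map u ↦ c · F1'(em u) is bijective
  have hem_add : ∀ a b : ℂ, em (a + b) = em a + em b := by
    intro a b; funext j; simp only [em, Pi.add_apply]; split <;> simp
  have hem_smul : ∀ (s : ℝ) (a : ℂ), em (s • a) = s • em a := by
    intro s a; funext j; simp only [em, Pi.smul_apply]; split <;> simp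
  let Lmap : ℂ →ₗ[ℝ] ℂ :=
    { toFun := fun u => c * F1' (em u)
      map_add' := fun a b => by
        show c * F1' (em (a + b)) = c * F1' (em a) + c * F1' (em b)
        rw [hem_add, map_add, mul_add]
      map_smul' := fun s a => by
        show c * F1' (em (s • a)) = (RingHom.id ℝ) s • (c * F1' (em a))
        rw [hem_smul, map_smul]
        simp only [smul_eq_mul, RingHom.id_apply, Complex.real_smul]
        ring }
  have hLinj : Function.Injective Lmap := by
    rw [← LinearMap.ker_eq_bot, LinearMap.ker_eq_bot']
    intro u hLu
    by_contra hu
    have h1 : F1' (em u) = 0 := by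
      have hcl : c * F1' (em u) = 0 := hLu
      rcases mul_eq_zero.mp hcl with h | h
      · exact absurd h hc
      · exact h
    have hp := hKey u hu
    rw [h1] at hp
    simp at hp
  have hLsurj : Function.Surjective Lmap := LinearMap.injective_iff_surjective.mp hLinj
  -- conclusion
  intro y
  let e : Fin n → ℂ := fun j => if j = i0 then 1 else 0
  let s : ℝ := y 0 / 2
  obtain ⟨u, hu⟩ := hLsurj (⟨y 1 - s * (T e).re, y 2 - s * (T e).im⟩ : ℂ)
  have hTem : T (em u) = ⟨y 1 - s * (T e).re, y 2 - s * (T e).im⟩ := by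
    rw [hTv]
    have h1 : (em u) i0 = 0 := by simp [em, hi01.symm]
    rw [h1, zero_add]
    exact hu
  refine ⟨s • e + em u, ?_⟩
  rw [hDr]
  have hρval : ∀ v : Fin n → ℂ, fderiv ℝ ρ z v = 2 * (v i0).re := by
    intro v
    rw [hgrad]
    congr 2
    rw [Finset.sum_eq_single i0]
    · rw [hd' i0]; simp
    · intro j _ hj; rw [hd' j]; simp [hj]
    · intro h; exact absurd (Finset.mem_univ i0) h
  have hTtot : T (s • e + em u) = s • T e + T (em u) := by
    rw [map_add, map_smul]
  have hlin0 : fderiv ℝ ρ z (s • e + em u) = y 0 := by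
    rw [hρval]
    have hv0 : (s • e + em u) i0 = (s : ℂ) := by
      simp [e, em, hi01.symm]
    rw [hv0]
    simp [s]
    ring
  funext i
  fin_cases i
  · show fderiv ℝ ρ z (s • e + em u) = y 0
    exact hlin0
  · show (T (s • e + em u)).re = y 1
    rw [hTtot, hTem]
    simp only [Complex.add_re, Complex.smul_re, smul_eq_mul]
    ring
  · show (T (s • e + em u)).im = y 2
    rw [hTtot, hTem]
    simp only [Complex.add_im, Complex.smul_im, smul_eq_mul]
    ring
end

section
/- Let M ⊂ R^N be a compact totally real C^1 submanifold identified locally with a graph over R^d, and let F be continuous on M. Define the Gaussian convolutions F̂_ν(ξ) = (ν/π)^{d/2} ∫_{R^d} F(η) e^{−ν(η−ξ)²} dV(η) in local coordinates. Then F̂_ν → F uniformly on compact subsets of M. -/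
open Filter MeasureTheory

lemma integrable_gauss (d : ℕ) {b : ℝ} (hb : 0 < b) :
    Integrable (fun v : EuclideanSpace ℝ (Fin d) => Real.exp (-b * ‖v‖ ^ 2)) := by
  have h := GaussianFourier.integrable_cexp_neg_mul_sq_norm_add
    (b := (b : ℂ)) (by simpa using hb) 0 (0 : EuclideanSpace ℝ (Fin d))
  have h2 := h.norm
  convert h2 using 2 with v
  simp [Complex.norm_exp]
  exact Or.inl (by simp [← Complex.ofReal_pow])

lemma integral_gauss (d : ℕ) {b : ℝ} (hb : 0 < b) :
    ∫ v : EuclideanSpace ℝ (Fin d), Real.exp (-b * ‖v‖ ^ 2)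
      = (Real.pi / b) ^ ((d : ℝ) / 2) := by
  rw [GaussianFourier.integral_rexp_neg_mul_sq_norm hb]
  simp

/-- Baouendi–Treves type Gaussian approximation, in the local coordinates identifying a
totally real manifold with `ℝᵈ`: for a continuous compactly supported `F : ℝᵈ → ℂ`, the
Gaussian convolutions `F̂_ν(ξ) = (ν/π)^{d/2} ∫_{ℝᵈ} F(η) e^{−ν|η−ξ|²} dV(η)` converge to
`F` uniformly on every compact set as `ν → ∞`. -/
theorem stmt_14 (d : ℕ) (F : EuclideanSpace ℝ (Fin d) → ℂ)
    (hFc : Continuous F) (hFsupp : HasCompactSupport F)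
    (Fhat : ℝ → EuclideanSpace ℝ (Fin d) → ℂ)
    (hFhat : ∀ ν : ℝ, 0 < ν → ∀ ξ, Fhat ν ξ =
      ((ν / Real.pi) ^ ((d : ℝ) / 2) : ℝ) •
        ∫ η : EuclideanSpace ℝ (Fin d), Real.exp (-ν * ‖η - ξ‖ ^ 2) • F η) :
    ∀ K : Set (EuclideanSpace ℝ (Fin d)), IsCompact K →
      TendstoUniformlyOn Fhat F atTop K := by
  intro K _hK
  obtain ⟨C, hC0, hC⟩ : ∃ C : ℝ, 0 ≤ C ∧ ∀ x, ‖F x‖ ≤ C := by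
    obtain ⟨C, hC⟩ := hFc.bounded_above_of_compact_support hFsupp
    exact ⟨max C 0, le_max_right _ _, fun x => (hC x).trans (le_max_left _ _)⟩
  have hFu : UniformContinuous F := hFsupp.uniformContinuous_of_continuous hFc
  have hF_int : Integrable F := hFc.integrable_of_hasCompactSupport hFsupp
  rw [Metric.tendstoUniformlyOn_iff]
  intro ε hε
  obtain ⟨δ, hδ0, hδ⟩ := Metric.uniformContinuous_iff.mp hFu (ε / 3) (by positivity)
  have tail : Tendsto
      (fun ν : ℝ => 2 * C * Real.exp (δ ^ 2) * (ν ^ ((d : ℝ) / 2) * Real.exp (-(δ ^ 2) * ν)))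
      atTop (nhds 0) := by
    have h := tendsto_rpow_mul_exp_neg_mul_atTop_nhds_zero ((d : ℝ) / 2) (δ ^ 2)
      (by positivity)
    simpa using h.const_mul (2 * C * Real.exp (δ ^ 2))
  have hev : ∀ᶠ ν : ℝ in atTop,
      2 * C * Real.exp (δ ^ 2) * (ν ^ ((d : ℝ) / 2) * Real.exp (-(δ ^ 2) * ν)) < ε / 3 :=
    tail.eventually (gt_mem_nhds (by positivity))
  filter_upwards [hev, eventually_ge_atTop (1 : ℝ)] with ν hνtail hν1 ξ _hξ
  have hν0 : 0 < ν := lt_of_lt_of_le one_pos hν1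
  set g : EuclideanSpace ℝ (Fin d) → ℝ := fun η => Real.exp (-ν * ‖η - ξ‖ ^ 2) with hg
  have hg_nonneg : ∀ η, 0 ≤ g η := fun η => (Real.exp_pos _).le
  have hg_le_one : ∀ η, g η ≤ 1 := fun η => Real.exp_le_one_iff.mpr (by nlinarith [sq_nonneg ‖η - ξ‖])
  have hg_int : Integrable g := (integrable_gauss d hν0).comp_sub_right ξ
  have hg_total : ∫ η, g η = (Real.pi / ν) ^ ((d : ℝ) / 2) := by
    have h1 := integral_sub_right_eq_self (μ := volume)
      (fun v : EuclideanSpace ℝ (Fin d) => Real.exp (-ν * ‖v‖ ^ 2)) ξ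
    rw [← integral_gauss d hν0]
    exact h1
  set c : ℝ := (ν / Real.pi) ^ ((d : ℝ) / 2) with hc
  have hc0 : 0 ≤ c := Real.rpow_nonneg (by positivity) _
  have hmass : c * (Real.pi / ν) ^ ((d : ℝ) / 2) = 1 := by
    rw [← Real.mul_rpow (by positivity) (by positivity)]
    rw [show ν / Real.pi * (Real.pi / ν) = 1 by
      field_simp]
    exact Real.one_rpow _
  have hgF_int : Integrable (fun η => g η • F η) := by
    have hgc : Continuous fun η : EuclideanSpace ℝ (Fin d) => ((g η : ℝ) : ℂ) := by
      fun_prop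
    have := hF_int.bdd_mul (f := fun η => ((g η : ℝ) : ℂ)) hgc.aestronglyMeasurable
      (c := 1) (Eventually.of_forall fun η => by
        rw [Complex.norm_real, Real.norm_eq_abs, abs_of_nonneg (hg_nonneg η)]
        exact hg_le_one η)
    simpa [Complex.real_smul] using this
  have hgc_int : Integrable (fun η => g η • F ξ) := hg_int.smul_const (F ξ)
  -- key identity
  have hkey : Fhat ν ξ - F ξ = c • ∫ η, g η • (F η - F ξ) := by
    have : (∫ η, g η • (F η - F ξ)) = (∫ η, g η • F η) - (∫ η, g η) • F ξ := by
      simp_rw [smul_sub]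
      rw [integral_sub hgF_int hgc_int, integral_smul_const]
    rw [this, smul_sub, hFhat ν hν0, hg_total, smul_smul]
    rw [hmass, one_smul]
  have diffbound : ∀ η, ‖F η - F ξ‖ ≤ 2 * C := fun η => by
    calc ‖F η - F ξ‖ ≤ ‖F η‖ + ‖F ξ‖ := norm_sub_le _ _
    _ ≤ 2 * C := by linarith [hC η, hC ξ]
  have heqn : ∀ η, g η * ‖F η - F ξ‖ = ‖g η • (F η - F ξ)‖ := fun η => by
    rw [norm_smul, Real.norm_eq_abs, abs_of_nonneg (hg_nonneg η)]
  have h_int_smul : Integrable (fun η => g η • (F η - F ξ)) := by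
    have := hgF_int.sub hgc_int
    simpa [smul_sub, Pi.sub_def] using this
  have h_int_norm : Integrable (fun η => g η * ‖F η - F ξ‖) := by
    simp_rw [heqn]
    exact h_int_smul.norm
  -- split the integral
  have hsplit : (∫ η, g η * ‖F η - F ξ‖)
      = (∫ η in Metric.ball ξ δ, g η * ‖F η - F ξ‖)
        + ∫ η in (Metric.ball ξ δ)ᶜ, g η * ‖F η - F ξ‖ :=
    (integral_add_compl measurableSet_ball h_int_norm).symm
  -- ball part
  have hball : (∫ η in Metric.ball ξ δ, g η * ‖F η - F ξ‖)
      ≤ ε / 3 * (Real.pi / ν) ^ ((d : ℝ) / 2) := by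
    have h1 : (∫ η in Metric.ball ξ δ, g η * ‖F η - F ξ‖)
        ≤ ∫ η in Metric.ball ξ δ, g η * (ε / 3) := by
      apply setIntegral_mono_on h_int_norm.integrableOn
        ((hg_int.mul_const (ε / 3)).integrableOn) measurableSet_ball
      intro η hη
      have := hδ (show dist η ξ < δ from hη)
      rw [dist_eq_norm] at this
      exact mul_le_mul_of_nonneg_left this.le (hg_nonneg η)
    have h2 : (∫ η in Metric.ball ξ δ, g η * (ε / 3)) ≤ ε / 3 * (Real.pi / ν) ^ ((d : ℝ) / 2) := by
      simp_rw [mul_comm (g _) (ε / 3)]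
      rw [integral_const_mul]
      have := setIntegral_le_integral (s := Metric.ball ξ δ) hg_int
        (Eventually.of_forall hg_nonneg)
      rw [hg_total] at this
      exact mul_le_mul_of_nonneg_left this (by positivity)
    linarith
  -- complement part
  have hcompl : (∫ η in (Metric.ball ξ δ)ᶜ, g η * ‖F η - F ξ‖)
      ≤ 2 * C * Real.exp (-(ν - 1) * δ ^ 2) * Real.pi ^ ((d : ℝ) / 2) := by
    set B : EuclideanSpace ℝ (Fin d) → ℝ :=
      fun η => 2 * C * Real.exp (-(ν - 1) * δ ^ 2) * Real.exp (-1 * ‖η - ξ‖ ^ 2) with hB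
    have hB_int : Integrable B :=
      ((integrable_gauss d one_pos).comp_sub_right ξ).const_mul _
    have h1 : (∫ η in (Metric.ball ξ δ)ᶜ, g η * ‖F η - F ξ‖)
        ≤ ∫ η in (Metric.ball ξ δ)ᶜ, B η := by
      apply setIntegral_mono_on h_int_norm.integrableOn hB_int.integrableOn
        measurableSet_ball.compl
      intro η hη
      have hd : δ ≤ ‖η - ξ‖ := by
        have := (Metric.mem_ball.not.mp hη)
        rw [dist_eq_norm] at this
        linarith [not_lt.mp this]
      have hgle : g η ≤ Real.exp (-(ν - 1) * δ ^ 2) * Real.exp (-1 * ‖η - ξ‖ ^ 2) := by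
        rw [← Real.exp_add]
        apply Real.exp_le_exp.mpr
        have hsq : δ ^ 2 ≤ ‖η - ξ‖ ^ 2 := pow_le_pow_left₀ hδ0.le hd 2
        nlinarith [mul_nonneg (sub_nonneg.mpr hν1) (sub_nonneg.mpr hsq)]
      calc g η * ‖F η - F ξ‖ ≤ g η * (2 * C) :=
            mul_le_mul_of_nonneg_left (diffbound η) (hg_nonneg η)
        _ ≤ (Real.exp (-(ν - 1) * δ ^ 2) * Real.exp (-1 * ‖η - ξ‖ ^ 2)) * (2 * C) :=
            mul_le_mul_of_nonneg_right hgle (by positivity)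
        _ = B η := by ring
    have h2 : (∫ η in (Metric.ball ξ δ)ᶜ, B η) ≤ ∫ η, B η :=
      setIntegral_le_integral hB_int (Eventually.of_forall fun η => by positivity)
    have h3 : (∫ η, B η) = 2 * C * Real.exp (-(ν - 1) * δ ^ 2) * Real.pi ^ ((d : ℝ) / 2) := by
      rw [hB, integral_const_mul]
      congr 1
      have h1 := integral_sub_right_eq_self (μ := volume)
        (fun v : EuclideanSpace ℝ (Fin d) => Real.exp (-1 * ‖v‖ ^ 2)) ξ
      rw [show (∫ η : EuclideanSpace ℝ (Fin d), Real.exp (-1 * ‖η - ξ‖ ^ 2))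
          = ∫ v : EuclideanSpace ℝ (Fin d), Real.exp (-1 * ‖v‖ ^ 2) from h1,
        integral_gauss d one_pos]
      simp
    linarith
  -- assemble
  have hnorm : ‖Fhat ν ξ - F ξ‖ ≤ c * ∫ η, g η * ‖F η - F ξ‖ := by
    rw [hkey, norm_smul, Real.norm_eq_abs, abs_of_nonneg hc0]
    refine mul_le_mul_of_nonneg_left ?_ hc0
    calc ‖∫ η, g η • (F η - F ξ)‖ ≤ ∫ η, ‖g η • (F η - F ξ)‖ :=
          norm_integral_le_integral_norm _
      _ = ∫ η, g η * ‖F η - F ξ‖ := by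
          congr 1; funext η; rw [heqn]
  have hcpi : c * Real.pi ^ ((d : ℝ) / 2) = ν ^ ((d : ℝ) / 2) := by
    rw [hc, Real.div_rpow hν0.le Real.pi_pos.le, div_mul_cancel₀]
    positivity
  have hexp : Real.exp (-(ν - 1) * δ ^ 2) = Real.exp (δ ^ 2) * Real.exp (-(δ ^ 2) * ν) := by
    rw [← Real.exp_add]; ring_nf
  have final : ‖Fhat ν ξ - F ξ‖ < ε := by
    have hb := hsplit ▸ hnorm
    have : c * ((∫ η in Metric.ball ξ δ, g η * ‖F η - F ξ‖)
        + ∫ η in (Metric.ball ξ δ)ᶜ, g η * ‖F η - F ξ‖)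
        ≤ c * (ε / 3 * (Real.pi / ν) ^ ((d : ℝ) / 2)
          + 2 * C * Real.exp (-(ν - 1) * δ ^ 2) * Real.pi ^ ((d : ℝ) / 2)) :=
      mul_le_mul_of_nonneg_left (by linarith) hc0
    have heq : c * (ε / 3 * (Real.pi / ν) ^ ((d : ℝ) / 2)
        + 2 * C * Real.exp (-(ν - 1) * δ ^ 2) * Real.pi ^ ((d : ℝ) / 2))
        = ε / 3 + 2 * C * Real.exp (δ ^ 2) * (ν ^ ((d : ℝ) / 2) * Real.exp (-(δ ^ 2) * ν)) := by
      rw [hexp]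
      have : c * (ε / 3 * (Real.pi / ν) ^ ((d : ℝ) / 2)) = ε / 3 := by
        rw [mul_comm (ε / 3) _, ← mul_assoc, hmass]; ring
      calc c * (ε / 3 * (Real.pi / ν) ^ ((d : ℝ) / 2)
            + 2 * C * (Real.exp (δ ^ 2) * Real.exp (-(δ ^ 2) * ν)) * Real.pi ^ ((d : ℝ) / 2))
          = c * (ε / 3 * (Real.pi / ν) ^ ((d : ℝ) / 2))
            + 2 * C * (Real.exp (δ ^ 2) * Real.exp (-(δ ^ 2) * ν))
              * (c * Real.pi ^ ((d : ℝ) / 2)) := by ring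
        _ = ε / 3 + 2 * C * Real.exp (δ ^ 2) * (ν ^ ((d : ℝ) / 2) * Real.exp (-(δ ^ 2) * ν)) := by
            rw [this, hcpi]; ring
    calc ‖Fhat ν ξ - F ξ‖ ≤ _ := hb.trans this
      _ = ε / 3 + 2 * C * Real.exp (δ ^ 2) * (ν ^ ((d : ℝ) / 2) * Real.exp (-(δ ^ 2) * ν)) := heq
      _ < ε / 3 + ε / 3 := by linarith
      _ < ε := by linarith
  rw [dist_eq_norm']
  exact final
end
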